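/- Let (P, ≤) be the poset ℤ × {0,1} with (n,0) < (m,1) iff n = m, and let τ = {∅} ∪ {P \ F : F a finite downset} (where a downset F satisfies: a ∈ F and b ≤ a imply b ∈ F). Then τ is a topology on P whose specialization preorder is ≤, the set of closed points of (P,τ) is ℤ × {0}, every point of ℤ × {1} is a non-closed T_D point, and the set ℤ × {0} of closed (hence recurrent) points is not closed in (P, τ). -/

import Mathlib

/-- The order on `P = ℤ × Bool`: `(n,0) < (m,1)` iff `n = m` (with `false` playing the
role of `0` and `true` the role of `1`). -/
def ple (a b : ℤ × Bool) : Prop :=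
  a = b ∨ (a.1 = b.1 ∧ a.2 = false ∧ b.2 = true)

namespace Stmt19Aux

/-- Closed sets: `univ` together with finite downsets. -/
def T : Set (Set (ℤ × Bool)) :=
  {S | S = Set.univ ∨ (S.Finite ∧ ∀ a ∈ S, ∀ b : ℤ × Bool, ple b a → b ∈ S)}

lemma downset_of_mem {S : Set (ℤ × Bool)} (hS : S ∈ T) :
    ∀ a ∈ S, ∀ b : ℤ × Bool, ple b a → b ∈ S := by
  rcases hS with h | h
  · intro a _ b _; simp [h]
  · exact h.2

lemma empty_mem : ∅ ∈ T := Or.inr ⟨Set.finite_empty, by simp⟩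

lemma sInter_mem : ∀ A, A ⊆ T → ⋂₀ A ∈ T := by
  intro A hA
  by_cases hfin : ∃ S ∈ A, S.Finite ∧ ∀ a ∈ S, ∀ b : ℤ × Bool, ple b a → b ∈ S
  · obtain ⟨S, hSA, hSfin, _⟩ := hfin
    refine Or.inr ⟨hSfin.subset (Set.sInter_subset_of_mem hSA), ?_⟩
    intro a ha b hba
    intro S' hS'
    exact downset_of_mem (hA hS') a (ha S' hS') b hba
  · left
    apply Set.eq_univ_of_forall
    intro x S hS
    rcases hA hS with h | h
    · simp [h]
    · exact absurd ⟨S, hS, h.1, h.2⟩ hfin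

lemma union_mem : ∀ A, A ∈ T → ∀ B, B ∈ T → A ∪ B ∈ T := by
  rintro A (rfl | hA) B hB
  · left; simp
  · rcases hB with rfl | hB
    · left; simp
    · refine Or.inr ⟨hA.1.union hB.1, ?_⟩
      rintro a (ha | ha) b hba
      · exact Or.inl (hA.2 a ha b hba)
      · exact Or.inr (hB.2 a ha b hba)

def t : TopologicalSpace (ℤ × Bool) := TopologicalSpace.ofClosed T empty_mem sInter_mem union_mem

lemma isOpen_iff (U : Set (ℤ × Bool)) : t.IsOpen U ↔ Uᶜ ∈ T := Iff.rfl

lemma isClosed_iff (S : Set (ℤ × Bool)) : @IsClosed _ t S ↔ S ∈ T := by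
  have h : @IsClosed _ t S ↔ Sᶜᶜ ∈ T :=
    ⟨fun h => h.isOpen_compl, fun h => @IsClosed.mk _ t S h⟩
  rw [h, compl_compl]

lemma ple_refl (a : ℤ × Bool) : ple a a := Or.inl rfl

lemma down_mem_T (b : ℤ × Bool) : {a | ple a b} ∈ T := by
  refine Or.inr ⟨?_, ?_⟩
  · refine ((Set.finite_singleton ((b.1, false) : ℤ × Bool)).insert b).subset ?_
    rintro a (rfl | ⟨h1, h2, _⟩)
    · exact Set.mem_insert _ _
    · apply Set.mem_insert_of_mem
      simp [Prod.ext_iff, h1, h2]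
  · rintro a ha c (rfl | ⟨h1, h2, h3⟩)
    · exact ha
    · rcases ha with rfl | ⟨g1, g2, g3⟩
      · exact Or.inr ⟨h1, h2, h3⟩
      · rw [h3] at g2; exact absurd g2 (by simp)

lemma closure_singleton (b : ℤ × Bool) : @closure _ t {b} = {a | ple a b} := by
  apply Set.Subset.antisymm
  · exact @closure_minimal _ t {b} {a | ple a b} (by simpa using ple_refl b)
      ((isClosed_iff _).2 (down_mem_T b))
  · intro a ha
    have hc : @closure _ t {b} ∈ T := (isClosed_iff _).1 (@isClosed_closure _ t {b})
    have hb : b ∈ @closure _ t {b} := @subset_closure _ t {b} b rfl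
    exact downset_of_mem hc b hb a ha

end Stmt19Aux

open Stmt19Aux in
theorem stmt_19 :
    ∃ t : TopologicalSpace (ℤ × Bool),
      (∀ U : Set (ℤ × Bool), t.IsOpen U ↔
        (U = ∅ ∨ ∃ F : Set (ℤ × Bool), F.Finite ∧
          (∀ a ∈ F, ∀ b : ℤ × Bool, ple b a → b ∈ F) ∧ U = Fᶜ)) ∧
      (∀ a b : ℤ × Bool, a ∈ @closure _ t {b} ↔ ple a b) ∧
      (∀ n : ℤ, @IsClosed _ t {((n, false) : ℤ × Bool)}) ∧
      (∀ n : ℤ, ¬ @IsClosed _ t {((n, true) : ℤ × Bool)} ∧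
        @IsClosed _ t (@closure _ t {((n, true) : ℤ × Bool)} \ {(n, true)})) ∧
      ¬ @IsClosed _ t {p : ℤ × Bool | p.2 = false} := by
  refine ⟨t, ?_, ?_, ?_, ?_, ?_⟩
  · intro U
    rw [isOpen_iff]
    constructor
    · rintro (h | ⟨hfin, hdown⟩)
      · left; rwa [← Set.compl_univ_iff]
      · exact Or.inr ⟨Uᶜ, hfin, hdown, (compl_compl U).symm⟩
    · rintro (rfl | ⟨F, hfin, hdown, rfl⟩)
      · left; simp
      · right; rw [compl_compl]; exact ⟨hfin, hdown⟩
  · intro a b; rw [closure_singleton]; rfl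
  · intro n
    rw [isClosed_iff]
    refine Or.inr ⟨Set.finite_singleton _, ?_⟩
    rintro a rfl b (rfl | ⟨h1, h2, h3⟩)
    · rfl
    · simp at h3
  · intro n
    constructor
    · rw [isClosed_iff]
      rintro (h | ⟨_, hdown⟩)
      · have : ((n+1, true) : ℤ × Bool) ∈ ({((n, true) : ℤ × Bool)} : Set _) := by
          rw [h]; trivial
        simp at this
      · have := hdown (n, true) rfl (n, false) (Or.inr ⟨rfl, rfl, rfl⟩)
        simp at this
    · rw [closure_singleton]
      have : {a | ple a ((n, true) : ℤ × Bool)} \ {((n, true) : ℤ × Bool)}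
          = {((n, false) : ℤ × Bool)} := by
        ext a
        constructor
        · rintro ⟨(rfl | ⟨h1, h2, _⟩), hne⟩
          · exact absurd rfl hne
          · simp only [Set.mem_singleton_iff, Prod.ext_iff]; exact ⟨h1, h2⟩
        · rintro rfl
          exact ⟨Or.inr ⟨rfl, rfl, rfl⟩, by simp⟩
      rw [this, isClosed_iff]
      refine Or.inr ⟨Set.finite_singleton _, ?_⟩
      rintro a rfl b (rfl | ⟨h1, h2, h3⟩)
      · rfl
      · simp at h3
  · rw [isClosed_iff]
    rintro (h | ⟨hfin, _⟩)
    · have : ((0, true) : ℤ × Bool) ∈ {p : ℤ × Bool | p.2 = false} := by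
        rw [h]; trivial
      simp at this
    · have : Set.InjOn Prod.fst {p : ℤ × Bool | p.2 = false} := by
        rintro ⟨x, bx⟩ hx ⟨y, by'⟩ hy h
        simp only [Set.mem_setOf_eq] at hx hy
        simp_all [Prod.ext_iff]
      have hZ : (Set.univ : Set ℤ).Finite := by
        have himg := hfin.image Prod.fst
        refine himg.subset ?_
        intro n _
        exact ⟨(n, false), rfl, rfl⟩
      exact Set.infinite_univ hZ
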